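/- In the quotient path algebra Γ of the doubled A_N quiver with relations x₁x₁* = 0, x_{N-1}*x_{N-1} = 0, and xᵢ*xᵢ = x_{i+1}x_{i+1}*, any loop at vertex i of length strictly greater than 2·min(i−1, N−i) is zero. -/

import Mathlib

/-! Path algebra of the doubled `A_N` quiver, modulo the Brauer-line relations
`x₁x₁* = 0`, `x_{N-1}*x_{N-1} = 0`, `xᵢ*xᵢ = x_{i+1}x_{i+1}*`.
A path from vertex `i` is encoded by its list of steps (`true` = `x` going up,
`false` = `x*` going down, concatenation-of-paths convention). -/

/-- All vertices visited by the step list `L` starting at `i` lie in `{1, …, N}`. -/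
def okSteps (N : ℕ) : ℤ → List Bool → Prop
  | i, [] => 1 ≤ i ∧ i ≤ (N : ℤ)
  | i, b :: L => 1 ≤ i ∧ i ≤ (N : ℤ) ∧ okSteps N (if b then i + 1 else i - 1) L

/-- The endpoint of the step list `L` starting at `i`. -/
def targetV : ℤ → List Bool → ℤ
  | i, [] => i
  | i, b :: L => targetV (if b then i + 1 else i - 1) L

/-- `L` encodes a path in the doubled `A_N` quiver from `i` to `j` of length `k`. -/
def IsPathFrom (N : ℕ) (i j : ℤ) (k : ℕ) (L : List Bool) : Prop :=
  okSteps N i L ∧ targetV i L = j ∧ L.length = k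

/-- The set of paths from `i` to `j` of length `k`, a basis of `e_i (FQ)_k e_j`. -/
def PathIdx (N : ℕ) (i j : ℤ) (k : ℕ) : Type :=
  {L : List Bool // IsPathFrom N i j k L}

/-- The relators spanning the degree-`k`, `(i,j)`-component of the ideal
`⟨x₁x₁*, x_{N-1}*x_{N-1}, xᵢ*xᵢ - x_{i+1}x_{i+1}*⟩` inside `e_i (FQ)_k e_j`:
a path containing `x₁x₁*` (up-down at vertex `1`) or `x_{N-1}*x_{N-1}` (down-up at
vertex `N`) is a relator, and so is the difference of two paths related by swapping a
down-up at an interior vertex into the corresponding up-down. -/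
def relators (F : Type*) [Field F] (N : ℕ) (i j : ℤ) (k : ℕ) :
    Set (PathIdx N i j k →₀ F) :=
  {v | ∃ A B : List Bool,
    (∃ h : IsPathFrom N i j k (A ++ [true, false] ++ B),
      targetV i A = 1 ∧ v = Finsupp.single ⟨A ++ [true, false] ++ B, h⟩ 1) ∨
    (∃ h : IsPathFrom N i j k (A ++ [false, true] ++ B),
      targetV i A = (N : ℤ) ∧ v = Finsupp.single ⟨A ++ [false, true] ++ B, h⟩ 1) ∨
    (∃ (h1 : IsPathFrom N i j k (A ++ [false, true] ++ B))
        (h2 : IsPathFrom N i j k (A ++ [true, false] ++ B)),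
      2 ≤ targetV i A ∧ targetV i A ≤ (N : ℤ) - 1 ∧
      v = Finsupp.single ⟨A ++ [false, true] ++ B, h1⟩ 1
          - Finsupp.single ⟨A ++ [true, false] ++ B, h2⟩ 1)}

/-- The component `e_i Γ_k e_j` of the quotient path algebra `Γ = FQ/⟨I⟩`. -/
def PathComp (F : Type*) [Field F] (N : ℕ) (i j : ℤ) (k : ℕ) :=
  (PathIdx N i j k →₀ F) ⧸ Submodule.span F (relators F N i j k)

noncomputable instance (F : Type*) [Field F] (N : ℕ) (i j : ℤ) (k : ℕ) :
    AddCommGroup (PathComp F N i j k) :=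
  Submodule.Quotient.addCommGroup _

noncomputable instance (F : Type*) [Field F] (N : ℕ) (i j : ℤ) (k : ℕ) :
    Module F (PathComp F N i j k) :=
  Submodule.Quotient.module _

/-- The class of a path in `e_i Γ_k e_j`. -/
noncomputable def pathClass (F : Type*) [Field F] {N : ℕ} {i j : ℤ} {k : ℕ} (p : PathIdx N i j k) :
    PathComp F N i j k :=
  Submodule.Quotient.mk (Finsupp.single p 1)


lemma targetV_append (i : ℤ) (A B : List Bool) :
    targetV i (A ++ B) = targetV (targetV i A) B := by
  induction A generalizing i with
  | nil => simp [targetV]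
  | cons b A ih => simp [targetV, ih]

lemma okSteps_start {N : ℕ} {i : ℤ} {L : List Bool} (h : okSteps N i L) :
    1 ≤ i ∧ i ≤ (N : ℤ) := by
  cases L with
  | nil => exact h
  | cons b L => exact ⟨h.1, h.2.1⟩

lemma okSteps_append {N : ℕ} {i : ℤ} {A B : List Bool} :
    okSteps N i (A ++ B) ↔ okSteps N i A ∧ okSteps N (targetV i A) B := by
  induction A generalizing i with
  | nil =>
    simp only [List.nil_append, targetV, okSteps]
    exact ⟨fun h => ⟨okSteps_start h, h⟩, fun h => h.2⟩
  | cons b A ih =>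
    simp only [List.cons_append, okSteps, targetV, List.append_eq, ih]
    tauto

/-- Number of (down, up) inverted pairs. -/
def invUp : List Bool → ℕ
  | [] => 0
  | true :: L => invUp L
  | false :: L => L.count true + invUp L

/-- Number of (up, down) inverted pairs. -/
def invDown : List Bool → ℕ
  | [] => 0
  | true :: L => L.count false + invDown L
  | false :: L => invDown L

lemma invUp_nil : invUp [] = 0 := rfl
lemma invUp_true (L : List Bool) : invUp (true :: L) = invUp L := rfl
lemma invUp_false (L : List Bool) : invUp (false :: L) = L.count true + invUp L := rfl
lemma invDown_nil : invDown [] = 0 := rfl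
lemma invDown_false (L : List Bool) : invDown (false :: L) = invDown L := rfl
lemma invDown_true (L : List Bool) : invDown (true :: L) = L.count false + invDown L := rfl

lemma invUp_append (A B : List Bool) :
    invUp (A ++ B) = invUp A + invUp B + A.count false * B.count true := by
  induction A with
  | nil => simp [invUp_nil]
  | cons b A ih =>
    cases b
    · rw [List.cons_append, invUp_false, invUp_false, ih, List.count_append,
        List.count_cons]
      simp
      ring
    · rw [List.cons_append, invUp_true, invUp_true, ih, List.count_cons]
      simp

lemma invDown_append (A B : List Bool) :
    invDown (A ++ B) = invDown A + invDown B + A.count true * B.count false := by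
  induction A with
  | nil => simp [invDown_nil]
  | cons b A ih =>
    cases b
    · rw [List.cons_append, invDown_false, invDown_false, ih, List.count_cons]
      simp
    · rw [List.cons_append, invDown_true, invDown_true, ih, List.count_append,
        List.count_cons]
      simp
      ring

lemma invUp_swap (A B : List Bool) :
    invUp (A ++ [false, true] ++ B) = invUp (A ++ [true, false] ++ B) + 1 := by
  rw [invUp_append, invUp_append, invUp_append, invUp_append]
  simp [List.count_cons, invUp_false, invUp_true, invUp_nil]
  ring

lemma invDown_swap (A B : List Bool) :
    invDown (A ++ [true, false] ++ B) = invDown (A ++ [false, true] ++ B) + 1 := by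
  rw [invDown_append, invDown_append, invDown_append, invDown_append]
  simp [List.count_cons, invDown_false, invDown_true, invDown_nil]
  ring

lemma invUp_eq_zero {L : List Bool} (h : invUp L = 0) :
    ∃ a b, L = List.replicate a true ++ List.replicate b false := by
  induction L with
  | nil => exact ⟨0, 0, rfl⟩
  | cons b L ih =>
    cases b with
    | true =>
      obtain ⟨a, c, rfl⟩ := ih h
      exact ⟨a + 1, c, by simp [List.replicate_succ]⟩
    | false =>
      rw [invUp_false] at h
      have h1 : L.count true = 0 := by omega
      have h2 : ∀ x ∈ L, x = false := by
        intro x hx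
        cases x
        · rfl
        · exact absurd (List.count_pos_iff.mpr hx) (by omega)
      refine ⟨0, L.length + 1, ?_⟩
      simp [List.replicate_succ]
      exact List.eq_replicate_of_mem h2

lemma invDown_eq_zero {L : List Bool} (h : invDown L = 0) :
    ∃ a b, L = List.replicate a false ++ List.replicate b true := by
  induction L with
  | nil => exact ⟨0, 0, rfl⟩
  | cons b L ih =>
    cases b with
    | false =>
      obtain ⟨a, c, rfl⟩ := ih h
      exact ⟨a + 1, c, by simp [List.replicate_succ]⟩
    | true =>
      rw [invDown_true] at h
      have h1 : L.count false = 0 := by omega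
      have h2 : ∀ x ∈ L, x = true := by
        intro x hx
        cases x
        · exact absurd (List.count_pos_iff.mpr hx) (by omega)
        · rfl
      refine ⟨0, L.length + 1, ?_⟩
      simp [List.replicate_succ]
      exact List.eq_replicate_of_mem h2

lemma pattern_of_mem_true {L : List Bool} (h : true ∈ L) :
    ∃ A B, (false :: L) = A ++ [false, true] ++ B := by
  induction L with
  | nil => simp at h
  | cons b L ih =>
    cases b with
    | true => exact ⟨[], L, rfl⟩
    | false =>
      have : true ∈ L := by simpa using h
      obtain ⟨A, B, hAB⟩ := ih this
      exact ⟨false :: A, B, by rw [List.cons_append, List.cons_append, ← hAB]⟩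

lemma pattern_of_mem_false {L : List Bool} (h : false ∈ L) :
    ∃ A B, (true :: L) = A ++ [true, false] ++ B := by
  induction L with
  | nil => simp at h
  | cons b L ih =>
    cases b with
    | false => exact ⟨[], L, rfl⟩
    | true =>
      have : false ∈ L := by simpa using h
      obtain ⟨A, B, hAB⟩ := ih this
      exact ⟨true :: A, B, by rw [List.cons_append, List.cons_append, ← hAB]⟩

lemma invUp_ne_zero {L : List Bool} (h : invUp L ≠ 0) :
    ∃ A B, L = A ++ [false, true] ++ B := by
  induction L with
  | nil => exact absurd rfl h
  | cons b L ih =>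
    cases b with
    | true =>
      rw [invUp_true] at h
      obtain ⟨A, B, hAB⟩ := ih h
      exact ⟨true :: A, B, by rw [List.cons_append, List.cons_append, ← hAB]⟩
    | false =>
      rw [invUp_false] at h
      by_cases hc : L.count true = 0
      · obtain ⟨A, B, hAB⟩ := ih (by omega)
        exact ⟨false :: A, B, by rw [List.cons_append, List.cons_append, ← hAB]⟩
      · exact pattern_of_mem_true (List.count_pos_iff.mp (by omega))

lemma invDown_ne_zero {L : List Bool} (h : invDown L ≠ 0) :
    ∃ A B, L = A ++ [true, false] ++ B := by
  induction L with
  | nil => exact absurd rfl h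
  | cons b L ih =>
    cases b with
    | false =>
      rw [invDown_false] at h
      obtain ⟨A, B, hAB⟩ := ih h
      exact ⟨false :: A, B, by rw [List.cons_append, List.cons_append, ← hAB]⟩
    | true =>
      rw [invDown_true] at h
      by_cases hc : L.count false = 0
      · obtain ⟨A, B, hAB⟩ := ih (by omega)
        exact ⟨true :: A, B, by rw [List.cons_append, List.cons_append, ← hAB]⟩
      · exact pattern_of_mem_false (List.count_pos_iff.mp (by omega))

lemma okSteps_replicate_true {N : ℕ} {M : List Bool} :
    ∀ (a : ℕ) (i : ℤ), okSteps N i (List.replicate a true ++ M) → i + a ≤ N := by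
  intro a
  induction a with
  | zero => intro i h; simpa using (okSteps_start h).2
  | succ a ih =>
    intro i h
    rw [List.replicate_succ, List.cons_append] at h
    have := ih (i + 1) (by simpa using h.2.2)
    omega

lemma okSteps_replicate_false {N : ℕ} {M : List Bool} :
    ∀ (a : ℕ) (i : ℤ), okSteps N i (List.replicate a false ++ M) → 1 ≤ i - a := by
  intro a
  induction a with
  | zero => intro i h; simpa using (okSteps_start h).1
  | succ a ih =>
    intro i h
    rw [List.replicate_succ, List.cons_append] at h
    have := ih (i - 1) (by simpa using h.2.2)
    omega

lemma targetV_replicate_true : ∀ (a : ℕ) (i : ℤ), targetV i (List.replicate a true) = i + a := by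
  intro a
  induction a with
  | zero => intro i; simp [targetV]
  | succ a ih => intro i; rw [List.replicate_succ]; simp [targetV, ih]; ring

lemma targetV_replicate_false : ∀ (a : ℕ) (i : ℤ), targetV i (List.replicate a false) = i - a := by
  intro a
  induction a with
  | zero => intro i; simp [targetV]
  | succ a ih => intro i; rw [List.replicate_succ]; simp [targetV, ih]; ring

lemma okSteps_cons_false {N : ℕ} {i : ℤ} {L : List Bool} :
    okSteps N i (false :: L) ↔ 1 ≤ i ∧ i ≤ (N : ℤ) ∧ okSteps N (i - 1) L := by
  simp [okSteps]

lemma okSteps_cons_true {N : ℕ} {i : ℤ} {L : List Bool} :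
    okSteps N i (true :: L) ↔ 1 ≤ i ∧ i ≤ (N : ℤ) ∧ okSteps N (i + 1) L := by
  simp [okSteps]

lemma targetV_cons_false (i : ℤ) (L : List Bool) :
    targetV i (false :: L) = targetV (i - 1) L := by simp [targetV]

lemma targetV_cons_true (i : ℤ) (L : List Bool) :
    targetV i (true :: L) = targetV (i + 1) L := by simp [targetV]

lemma mainUp (F : Type*) [Field F] (N : ℕ) (i j : ℤ) (k : ℕ) :
    ∀ (m : ℕ) (L : List Bool), invUp L ≤ m → ∀ (h : IsPathFrom N i j k L),
    Finsupp.single (⟨L, h⟩ : PathIdx N i j k) (1 : F) ∈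
        Submodule.span F (relators F N i j k) ∨
    ∃ (a b : ℕ) (h' : IsPathFrom N i j k (List.replicate a true ++ List.replicate b false)),
      Finsupp.single (⟨L, h⟩ : PathIdx N i j k) (1 : F)
        - Finsupp.single (⟨_, h'⟩ : PathIdx N i j k) 1 ∈
          Submodule.span F (relators F N i j k) := by
  have base : ∀ (L : List Bool), invUp L = 0 → ∀ (h : IsPathFrom N i j k L),
      Finsupp.single (⟨L, h⟩ : PathIdx N i j k) (1 : F) ∈
          Submodule.span F (relators F N i j k) ∨
      ∃ (a b : ℕ) (h' : IsPathFrom N i j k (List.replicate a true ++ List.replicate b false)),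
        Finsupp.single (⟨L, h⟩ : PathIdx N i j k) (1 : F)
          - Finsupp.single (⟨_, h'⟩ : PathIdx N i j k) 1 ∈
            Submodule.span F (relators F N i j k) := by
    intro L h0 h
    obtain ⟨a, b, rfl⟩ := invUp_eq_zero h0
    right
    exact ⟨a, b, h, by convert Submodule.zero_mem _ using 1; exact sub_self _⟩
  intro m
  induction m with
  | zero => intro L hm h; exact base L (Nat.le_zero.mp hm) h
  | succ m ih =>
    intro L hm h
    by_cases h0 : invUp L = 0
    · exact base L h0 h
    · obtain ⟨A, B, rfl⟩ := invUp_ne_zero h0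
      have hok := h.1
      rw [List.append_assoc] at hok
      simp only [List.cons_append, List.nil_append] at hok
      rw [okSteps_append, okSteps_cons_false, okSteps_cons_true] at hok
      obtain ⟨hA, hv1, hvN2, hv2, hvN3, hBok⟩ := hok
      by_cases hvN : targetV i A = (N : ℤ)
      · left
        exact Submodule.subset_span ⟨A, B, Or.inr (Or.inl ⟨h, hvN, rfl⟩)⟩
      · have hBok' : okSteps N (targetV i A) B := by
          rwa [show targetV i A - 1 + 1 = targetV i A from by ring] at hBok
        have h2 : IsPathFrom N i j k (A ++ [true, false] ++ B) := by
          refine ⟨?_, ?_, ?_⟩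
          · rw [List.append_assoc]
            simp only [List.cons_append, List.nil_append]
            rw [okSteps_append, okSteps_cons_true, okSteps_cons_false]
            refine ⟨hA, by omega, by omega, by omega, by omega, ?_⟩
            rwa [show targetV i A + 1 - 1 = targetV i A from by ring]
          · have ht := h.2.1
            rw [List.append_assoc, targetV_append] at ht ⊢
            simp only [List.cons_append, List.nil_append] at ht ⊢
            rw [targetV_cons_true, targetV_cons_false]
            rw [targetV_cons_false, targetV_cons_true] at ht
            rw [show targetV i A + 1 - 1 = targetV i A - 1 + 1 from by ring]
            exact ht
          · have hl := h.2.2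
            simp only [List.length_append, List.length_cons, List.length_nil] at hl ⊢
            omega
        have hrel : Finsupp.single (⟨A ++ [false, true] ++ B, h⟩ : PathIdx N i j k) (1 : F)
            - Finsupp.single (⟨A ++ [true, false] ++ B, h2⟩ : PathIdx N i j k) 1 ∈
              relators F N i j k :=
          ⟨A, B, Or.inr (Or.inr ⟨h, h2, by omega, by omega, rfl⟩)⟩
        have hm2 : invUp (A ++ [true, false] ++ B) ≤ m := by
          have := invUp_swap A B; omega
        rcases ih _ hm2 h2 with hmem | ⟨a, b, h', hmem⟩
        · left
          have := Submodule.add_mem _ (Submodule.subset_span hrel) hmem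
          exact (congrArg (· ∈ Submodule.span F (relators F N i j k))
            (sub_add_cancel (_ : PathIdx N i j k →₀ F) _)).mp this
        · right
          refine ⟨a, b, h', ?_⟩
          have := Submodule.add_mem _ (Submodule.subset_span hrel) hmem
          convert this using 1; exact (sub_add_sub_cancel _ _ _).symm

lemma mainDown (F : Type*) [Field F] (N : ℕ) (i j : ℤ) (k : ℕ) :
    ∀ (m : ℕ) (L : List Bool), invDown L ≤ m → ∀ (h : IsPathFrom N i j k L),
    Finsupp.single (⟨L, h⟩ : PathIdx N i j k) (1 : F) ∈
        Submodule.span F (relators F N i j k) ∨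
    ∃ (a b : ℕ) (h' : IsPathFrom N i j k (List.replicate a false ++ List.replicate b true)),
      Finsupp.single (⟨L, h⟩ : PathIdx N i j k) (1 : F)
        - Finsupp.single (⟨_, h'⟩ : PathIdx N i j k) 1 ∈
          Submodule.span F (relators F N i j k) := by
  have base : ∀ (L : List Bool), invDown L = 0 → ∀ (h : IsPathFrom N i j k L),
      Finsupp.single (⟨L, h⟩ : PathIdx N i j k) (1 : F) ∈
          Submodule.span F (relators F N i j k) ∨
      ∃ (a b : ℕ) (h' : IsPathFrom N i j k (List.replicate a false ++ List.replicate b true)),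
        Finsupp.single (⟨L, h⟩ : PathIdx N i j k) (1 : F)
          - Finsupp.single (⟨_, h'⟩ : PathIdx N i j k) 1 ∈
            Submodule.span F (relators F N i j k) := by
    intro L h0 h
    obtain ⟨a, b, rfl⟩ := invDown_eq_zero h0
    right
    exact ⟨a, b, h, by convert Submodule.zero_mem _ using 1; exact sub_self _⟩
  intro m
  induction m with
  | zero => intro L hm h; exact base L (Nat.le_zero.mp hm) h
  | succ m ih =>
    intro L hm h
    by_cases h0 : invDown L = 0
    · exact base L h0 h
    · obtain ⟨A, B, rfl⟩ := invDown_ne_zero h0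
      have hok := h.1
      rw [List.append_assoc] at hok
      simp only [List.cons_append, List.nil_append] at hok
      rw [okSteps_append, okSteps_cons_true, okSteps_cons_false] at hok
      obtain ⟨hA, hv1, hvN2, hv2, hvN3, hBok⟩ := hok
      by_cases hv1' : targetV i A = 1
      · left
        exact Submodule.subset_span ⟨A, B, Or.inl ⟨h, hv1', rfl⟩⟩
      · have hBok' : okSteps N (targetV i A) B := by
          rwa [show targetV i A + 1 - 1 = targetV i A from by ring] at hBok
        have h2 : IsPathFrom N i j k (A ++ [false, true] ++ B) := by
          refine ⟨?_, ?_, ?_⟩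
          · rw [List.append_assoc]
            simp only [List.cons_append, List.nil_append]
            rw [okSteps_append, okSteps_cons_false, okSteps_cons_true]
            refine ⟨hA, by omega, by omega, by omega, by omega, ?_⟩
            rwa [show targetV i A - 1 + 1 = targetV i A from by ring]
          · have ht := h.2.1
            rw [List.append_assoc, targetV_append] at ht ⊢
            simp only [List.cons_append, List.nil_append] at ht ⊢
            rw [targetV_cons_false, targetV_cons_true]
            rw [targetV_cons_true, targetV_cons_false] at ht
            rw [show targetV i A - 1 + 1 = targetV i A + 1 - 1 from by ring]
            exact ht
          · have hl := h.2.2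
            simp only [List.length_append, List.length_cons, List.length_nil] at hl ⊢
            omega
        have hrel : Finsupp.single (⟨A ++ [false, true] ++ B, h2⟩ : PathIdx N i j k) (1 : F)
            - Finsupp.single (⟨A ++ [true, false] ++ B, h⟩ : PathIdx N i j k) 1 ∈
              relators F N i j k :=
          ⟨A, B, Or.inr (Or.inr ⟨h2, h, by omega, by omega, rfl⟩)⟩
        have hrel' : Finsupp.single (⟨A ++ [true, false] ++ B, h⟩ : PathIdx N i j k) (1 : F)
            - Finsupp.single (⟨A ++ [false, true] ++ B, h2⟩ : PathIdx N i j k) 1 ∈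
              Submodule.span F (relators F N i j k) := by
          have := neg_mem (Submodule.subset_span (R := F) hrel)
          convert this using 1; exact (neg_sub _ _).symm
        have hm2 : invDown (A ++ [false, true] ++ B) ≤ m := by
          have := invDown_swap A B; omega
        rcases ih _ hm2 h2 with hmem | ⟨a, b, h', hmem⟩
        · left
          have := Submodule.add_mem _ hrel' hmem
          exact (congrArg (· ∈ Submodule.span F (relators F N i j k))
            (sub_add_cancel (_ : PathIdx N i j k →₀ F) _)).mp this
        · right
          refine ⟨a, b, h', ?_⟩
          have := Submodule.add_mem _ hrel' hmem
          convert this using 1; exact (sub_add_sub_cancel _ _ _).symm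
/-- Any loop at vertex `i` of length `> 2·min(i−1, N−i)` is zero in `Γ`. -/
theorem stmt8 (F : Type*) [Field F] (N : ℕ) (hN : 1 ≤ N) (i : ℤ)
    (hi : 1 ≤ i) (hiN : i ≤ (N : ℤ)) (k : ℕ)
    (hk : 2 * min (i - 1) ((N : ℤ) - i) < (k : ℤ))
    (p : PathIdx N i i k) :
    pathClass F p = 0 := by
  obtain ⟨L, hL⟩ := p
  refine (Submodule.Quotient.mk_eq_zero _
    (x := Finsupp.single (⟨L, hL⟩ : PathIdx N i i k) (1 : F))).mpr ?_
  rcases le_total (i - 1) ((N : ℤ) - i) with hmin | hmin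
  · rw [min_eq_left hmin] at hk
    rcases mainDown F N i i k (invDown L) L le_rfl hL with hmem | ⟨b, a, h', _⟩
    · exact hmem
    · exfalso
      have ht := h'.2.1
      rw [targetV_append, targetV_replicate_false, targetV_replicate_true] at ht
      have hlen := h'.2.2
      simp only [List.length_append, List.length_replicate] at hlen
      have hb : 1 ≤ i - (b : ℤ) := okSteps_replicate_false b i h'.1
      omega
  · rw [min_eq_right hmin] at hk
    rcases mainUp F N i i k (invUp L) L le_rfl hL with hmem | ⟨a, b, h', _⟩
    · exact hmem
    · exfalso
      have ht := h'.2.1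
      rw [targetV_append, targetV_replicate_true, targetV_replicate_false] at ht
      have hlen := h'.2.2
      simp only [List.length_append, List.length_replicate] at hlen
      have ha : i + (a : ℤ) ≤ (N : ℤ) := okSteps_replicate_true a i h'.1
      omega
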